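/- Let $(R,\mathfrak{m})$ be a two-dimensional regular local ring with regular system of parameters $x, y$, and let $0 < \alpha < \beta < n$ be integers. Set $I = (x^3, x^2y^{\alpha}, xy^{\beta}, y^n)$ and $Q = (x^3, y^n)$. Then $Q : I = (x^2, xy^{n-\beta}, y^{n-\alpha})$. -/

import Mathlib

open Ideal IsLocalRing Submodule

lemma aux_sup_pow_le {R : Type*} [CommRing R] (I J : Ideal R) (n : ℕ) :
    (I ⊔ J) ^ n ≤ I ⊔ J ^ n := by
  induction n with
  | zero => simp
  | succ n ih =>
    calc (I ⊔ J) ^ (n + 1) = (I ⊔ J) ^ n * (I ⊔ J) := pow_succ _ _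
      _ ≤ (I ⊔ J ^ n) * (I ⊔ J) := Ideal.mul_mono_left ih
      _ ≤ I ⊔ J ^ (n + 1) := by
          rw [Ideal.sup_mul]
          refine sup_le (le_trans Ideal.mul_le_left le_sup_left) ?_
          rw [Ideal.mul_sup]
          exact sup_le (le_trans Ideal.mul_le_right le_sup_left)
            (le_sup_of_le_right (le_of_eq (pow_succ J n).symm))

lemma aux_artinian {R : Type*} [CommRing R] [IsNoetherianRing R] [IsLocalRing R] :
    ∀ (t : ℕ) (I : Ideal R), maximalIdeal R ^ t ≤ I → IsArtinian R (R ⧸ I) := by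
  intro t
  induction t with
  | zero =>
    intro I hI
    have hI' : I = ⊤ := top_le_iff.mp (by simpa using hI)
    subst hI'
    have : Subsingleton (R ⧸ (⊤ : Ideal R)) :=
      Submodule.Quotient.subsingleton_iff.mpr rfl
    exact monotone_stabilizes_iff_artinian.mp (fun f => ⟨0, fun m _ => Subsingleton.elim _ _⟩)
  | succ t ih =>
    intro I hI
    -- first handle I = m^(t+1), then transfer along the surjection
    have key : IsArtinian R (R ⧸ (maximalIdeal R ^ (t + 1) : Ideal R)) := by
      set m : Ideal R := maximalIdeal R with hm
      set p : Ideal R := m ^ (t + 1) with hp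
      have hle : p ≤ (m ^ t : Ideal R) := Ideal.pow_le_pow_right (Nat.le_succ t)
      set N : Submodule R (R ⧸ p) := Submodule.map p.mkQ (m ^ t : Ideal R) with hN
      haveI := ih (m ^ t) le_rfl
      have h1 : IsArtinian R ((R ⧸ p) ⧸ N) :=
        isArtinian_of_linearEquiv
          (Submodule.quotientQuotientEquivQuotient p (m ^ t : Ideal R) hle).symm
      have hNfg : N.FG := IsNoetherian.noetherian N
      have hmap_p : Submodule.map p.mkQ p = ⊥ := by
        rw [eq_bot_iff]
        exact Submodule.map_le_iff_le_comap.mpr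
          (by rw [Submodule.comap_bot, Submodule.ker_mkQ])
      have hmN : m • N ≤ (⊥ : Submodule R (R ⧸ p)) := by
        rw [hN, ← Submodule.map_smul'']
        have : (m • (m ^ t : Ideal R) : Submodule R R) = p := by
          rw [smul_eq_mul, hp, pow_succ']
        rw [this, hmap_p]
      have htor : Module.IsTorsionBySet R N (m : Set R) := by
        intro z a
        have hz : (a : R) • (z : R ⧸ p) ∈ (⊥ : Submodule R (R ⧸ p)) :=
          Submodule.smul_le.mp hmN (a : R) a.2 (z : R ⧸ p) z.2
        ext
        simpa using hz
      letI : Module (R ⧸ m) N := htor.module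
      haveI : IsScalarTower R (R ⧸ m) N := htor.isScalarTower
      haveI : Module.Finite R N := Module.Finite.iff_fg.mpr hNfg
      haveI : Module.Finite (R ⧸ m) N := Module.Finite.of_restrictScalars_finite R (R ⧸ m) N
      letI : Field (R ⧸ m) := Ideal.Quotient.field m
      haveI hart : IsArtinian (R ⧸ m) N := isArtinian_of_fg_of_artinian' (R := R ⧸ m)
      have h2 : IsArtinian R N := by
        refine monotone_stabilizes_iff_artinian.mp (fun f => ?_)
        let toQuot : Submodule R N → Submodule (R ⧸ m) N := fun W =>
          { carrier := W
            add_mem' := fun ha hb => W.add_mem ha hb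
            zero_mem' := W.zero_mem
            smul_mem' := by
              intro c z hz
              obtain ⟨r, rfl⟩ := Ideal.Quotient.mk_surjective c
              have : (Ideal.Quotient.mk m r) • z = r • z := htor.mk_smul r z
              rw [this]
              exact W.smul_mem r hz }
        have memQuot : ∀ (W : Submodule R N) z, z ∈ toQuot W ↔ z ∈ W := fun W z => Iff.rfl
        let F : ℕ →o (Submodule (R ⧸ m) N)ᵒᵈ :=
          ⟨fun n => toQuot (f n), fun a b hab => fun z hz =>
            (memQuot _ z).mpr (f.monotone hab ((memQuot _ z).mp hz))⟩
        obtain ⟨n, hn⟩ := IsArtinian.monotone_stabilizes F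
        refine ⟨n, fun k hk => ?_⟩
        have h3 : toQuot (f n) = toQuot (f k) := hn k hk
        have hinj : ∀ W₁ W₂ : Submodule R N, toQuot W₁ = toQuot W₂ → W₁ = W₂ := by
          intro W₁ W₂ h
          apply SetLike.ext
          intro z
          constructor
          · intro hz
            exact (memQuot W₂ z).mp (h ▸ (memQuot W₁ z).mpr hz)
          · intro hz
            exact (memQuot W₁ z).mp (h.symm ▸ (memQuot W₂ z).mpr hz)
        exact hinj _ _ h3
      -- extension: N and (R⧸p)⧸N Artinian imply R⧸p Artinian
      exact isArtinian_of_range_eq_ker N.subtype N.mkQ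
        (by rw [Submodule.range_subtype, Submodule.ker_mkQ])
    -- now transfer to R ⧸ I along the natural surjection
    have hsurj : Function.Surjective
        (Submodule.mapQ (maximalIdeal R ^ (t + 1) : Ideal R) I LinearMap.id hI) := by
      intro z
      obtain ⟨r, rfl⟩ := Submodule.mkQ_surjective I z
      exact ⟨Submodule.mkQ _ r, rfl⟩
    exact isArtinian_of_surjective _ _ hsurj

lemma aux_no_middle {R : Type*} [CommRing R] [IsDomain R] [IsNoetherianRing R] [IsLocalRing R]
    (x : R) (hx : x ∈ maximalIdeal R) (t : ℕ)
    (hpow : maximalIdeal R ^ t ≤ Ideal.span {x})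
    (q : Ideal R) (hq : q.IsPrime) (h1 : ⊥ < q) (h2 : q < maximalIdeal R) : False := by
  have hxq : x ∉ q := by
    intro hxq
    have hle : maximalIdeal R ≤ q :=
      hq.le_of_pow_le (le_trans hpow (Ideal.span_le.mpr (by simpa using hxq)))
    exact absurd (lt_of_lt_of_le h2 hle) (lt_irrefl q)
  set S := Localization.AtPrime q with hS
  set φ := algebraMap R S with hφ
  haveI : IsNoetherianRing S := IsLocalization.isNoetherianRing q.primeCompl S ‹_›
  have hMle : q.primeCompl ≤ nonZeroDivisors R := by
    intro s hs
    refine mem_nonZeroDivisors_of_ne_zero ?_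
    rintro rfl; exact hs q.zero_mem
  haveI : IsDomain S := IsLocalization.isDomain_of_le_nonZeroDivisors S hMle
  set J : Ideal S := Ideal.map φ q with hJ
  have hJmax : J = maximalIdeal S := Localization.AtPrime.map_eq_maximalIdeal
  set q' : ℕ → Ideal R := fun n => Ideal.comap φ (J ^ n) with hq'
  have hmapq' : ∀ n, Ideal.map φ (q' n) = J ^ n := fun n =>
    IsLocalization.map_comap q.primeCompl S _
  have hanti : ∀ a b, a ≤ b → q' b ≤ q' a := fun a b hab =>
    Ideal.comap_mono (Ideal.pow_le_pow_right hab)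
  have hprimary : ∀ (n : ℕ) (c : R), c * x ∈ q' n → c ∈ q' n := by
    intro n c hc
    obtain ⟨u, hu⟩ : IsUnit (φ x) := IsLocalization.map_units (M := q.primeCompl) S ⟨x, hxq⟩
    have h3 : φ c * φ x ∈ J ^ n := by
      have := hc; rw [hq'] at this; simpa [Ideal.mem_comap, _root_.map_mul] using this
    have h5 : φ c = (φ c * φ x) * (↑u⁻¹ : S) := by
      rw [← hu, mul_assoc, Units.mul_inv, mul_one]
    rw [hq', Ideal.mem_comap]
    rw [h5]
    exact Ideal.mul_mem_right _ _ h3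
  set X : Ideal R := Ideal.span {x} with hX
  set D : ℕ → Ideal R := fun n => q' n ⊔ X with hD
  haveI := aux_artinian t X hpow
  set π := (X : Ideal R).mkQ with hπ
  have hDanti : ∀ a b : ℕ, a ≤ b → D b ≤ D a := fun a b hab =>
    sup_le_sup_right (hanti a b hab) X
  let f : ℕ →o (Submodule R (R ⧸ X))ᵒᵈ :=
    ⟨fun n => Submodule.map π (D n), fun a b hab => Submodule.map_mono (hDanti a b hab)⟩
  obtain ⟨N₀, hN₀⟩ := IsArtinian.monotone_stabilizes f
  set N₁ := N₀ + 1 with hN₁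
  have hDrec : ∀ n, D n = Submodule.comap π (Submodule.map π (D n)) := by
    intro n
    rw [hπ, Submodule.comap_map_mkQ, sup_eq_right.mpr le_sup_right]
  have hDeq : D N₁ = D (N₁ + 1) := by
    have h6 : Submodule.map π (D N₁) = Submodule.map π (D (N₁ + 1)) :=
      ((hN₀ N₁ (Nat.le_succ _)).symm.trans (hN₀ (N₁+1) (by omega)))
    rw [hDrec N₁, hDrec (N₁+1), h6]
  have hle1 : q' N₁ ≤ q' (N₁ + 1) ⊔ X • q' N₁ := by
    intro a ha
    have haD : a ∈ D (N₁ + 1) := by rw [← hDeq]; exact Ideal.mem_sup_left ha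
    obtain ⟨b, hb, c, hc, hbc⟩ := Submodule.mem_sup.mp haD
    obtain ⟨e, he⟩ := Ideal.mem_span_singleton'.mp hc
    have hex : e * x ∈ q' N₁ := by
      have : e * x = a - b := by rw [he, ← hbc]; ring
      rw [this]
      exact Submodule.sub_mem _ ha (hanti _ _ (Nat.le_succ _) hb)
    have heq : e ∈ q' N₁ := hprimary _ _ hex
    refine Submodule.mem_sup.mpr ⟨b, hb, c, ?_, hbc⟩
    rw [← he, smul_eq_mul, mul_comm e x]
    exact Ideal.mul_mem_mul (Ideal.mem_span_singleton_self x) heq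
  have hXjac : X ≤ Ideal.jacobson ⊥ := by
    rw [IsLocalRing.jacobson_eq_maximalIdeal ⊥ bot_ne_top]
    exact Ideal.span_le.mpr (by simpa using hx)
  have hsup := Submodule.sup_smul_eq_sup_smul_of_le_smul_of_le_jacobson
    (IsNoetherian.noetherian (q' N₁)) hXjac hle1
  have hq'eq : q' N₁ = q' (N₁ + 1) := by
    refine le_antisymm (hle1.trans ?_) (hanti _ _ (Nat.le_succ _))
    rw [hsup]
    simp
  have hJeq : (J : Ideal S) ^ N₁ = J ^ (N₁ + 1) := by
    rw [← hmapq' N₁, ← hmapq' (N₁ + 1), hq'eq]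
  haveI : IsLocalRing S := Localization.AtPrime.isLocalRing q
  have hbot : (J : Ideal S) ^ N₁ = ⊥ := by
    refine Submodule.eq_bot_of_le_smul_of_le_jacobson_bot J (J ^ N₁)
      (IsNoetherian.noetherian _) ?_ ?_
    · rw [smul_eq_mul, mul_comm, ← pow_succ]
      exact le_of_eq hJeq
    · rw [IsLocalRing.jacobson_eq_maximalIdeal ⊥ bot_ne_top]
      exact le_of_eq hJmax
  obtain ⟨a, haq, ha0⟩ := SetLike.exists_of_lt h1
  have hmem : φ a ∈ (J : Ideal S) := Ideal.mem_map_of_mem φ haq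
  have hpw : (φ a) ^ N₁ ∈ (J : Ideal S) ^ N₁ := Ideal.pow_mem_pow hmem N₁
  rw [hbot, Submodule.mem_bot] at hpw
  have hφa : φ a = 0 := pow_eq_zero_iff (n := N₁) (by omega) |>.mp hpw
  have : a = 0 := IsLocalization.injective S hMle (by rw [map_zero]; exact hφa)
  exact ha0 (by simp [this])

lemma aux_exists_middle {R : Type*} [CommRing R] [Nontrivial R] [IsLocalRing R]
    (hdim : ringKrullDim R = 2) :
    ∃ q : Ideal R, q.IsPrime ∧ ⊥ < q ∧ q < maximalIdeal R := by
  have hex : ∃ p : LTSeries (PrimeSpectrum R), 2 ≤ p.length := by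
    by_contra hcon
    push_neg at hcon
    have hle : ringKrullDim R ≤ 1 := by
      refine iSup_le fun p => ?_
      have := hcon p
      exact_mod_cast Nat.cast_le.mpr (by omega : p.length ≤ 1)
    rw [hdim] at hle
    norm_num at hle
  obtain ⟨p, hp⟩ := hex
  have h0 : (0 : Fin (p.length + 1)) < ⟨1, by omega⟩ := by
    rw [Fin.lt_def]; simp
  have h1 : (⟨1, by omega⟩ : Fin (p.length + 1)) < ⟨2, by omega⟩ := by
    rw [Fin.lt_def]; simp
  refine ⟨(p ⟨1, by omega⟩).asIdeal, (p ⟨1, by omega⟩).isPrime, ?_, ?_⟩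
  · calc (⊥ : Ideal R) ≤ (p 0).asIdeal := bot_le
      _ < (p ⟨1, by omega⟩).asIdeal :=
        (PrimeSpectrum.asIdeal_lt_asIdeal _ _).mpr (p.strictMono h0)
  · calc (p ⟨1, by omega⟩).asIdeal < (p ⟨2, by omega⟩).asIdeal :=
        (PrimeSpectrum.asIdeal_lt_asIdeal _ _).mpr (p.strictMono h1)
      _ ≤ maximalIdeal R := le_maximalIdeal (p ⟨2, by omega⟩).isPrime.ne_top

lemma aux_ynotin {R : Type*} [CommRing R] [IsDomain R] [IsNoetherianRing R] [IsLocalRing R]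
    (x y : R) (hm : maximalIdeal R = Ideal.span {x, y})
    (hdim : ringKrullDim R = 2) (k : ℕ) : y ^ k ∉ Ideal.span {x} := by
  intro hyk
  obtain ⟨q, hq, h1, h2⟩ := aux_exists_middle hdim
  have hxm : x ∈ maximalIdeal R := by rw [hm]; exact Ideal.subset_span (by simp)
  have hsup : maximalIdeal R = Ideal.span {x} ⊔ Ideal.span {y} := by
    rw [hm, Set.insert_eq, Ideal.span_union]
  have hpow : maximalIdeal R ^ (k + 1) ≤ Ideal.span {x} := by
    rw [hsup]
    refine le_trans (aux_sup_pow_le _ _ _) (sup_le le_rfl ?_)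
    rw [Ideal.span_singleton_pow, Ideal.span_le]
    simp only [Set.singleton_subset_iff, SetLike.mem_coe]
    have hyy : y ^ (k + 1) = y * y ^ k := by ring
    rw [hyy]
    exact Ideal.mul_mem_left _ y hyk
  exact aux_no_middle x hxm (k + 1) hpow q hq h1 h2

lemma aux_prime {R : Type*} [CommRing R] [IsDomain R] [IsNoetherianRing R] [IsLocalRing R]
    (x y : R) (hm : maximalIdeal R = Ideal.span {x, y})
    (hdim : ringKrullDim R = 2) : Prime x := by
  have hy : ∀ k, y ^ k ∉ Ideal.span {x} := aux_ynotin x y hm hdim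
  have hx0 : x ≠ 0 := by
    have hx' : x ∉ Ideal.span {y} := by
      simpa using aux_ynotin y x (by rw [hm, Set.pair_comm]) hdim 1
    intro h
    exact hx' (h ▸ Submodule.zero_mem _)
  have hne : (Ideal.span {x} : Ideal R) ≠ ⊤ := by
    intro h
    exact hy 1 (by rw [h, pow_one]; trivial)
  refine (Ideal.span_singleton_prime hx0).mp ?_
  set X : Ideal R := Ideal.span {x} with hX
  set A := R ⧸ X with hA
  set π : R →+* A := Ideal.Quotient.mk X with hπ
  haveI : Nontrivial A := Ideal.Quotient.nontrivial_iff.mpr hne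
  haveI : IsLocalRing A := IsLocalRing.of_surjective' π Ideal.Quotient.mk_surjective
  haveI : IsNoetherianRing A := isNoetherianRing_of_surjective R A π Ideal.Quotient.mk_surjective
  have hym : y ∈ maximalIdeal R := by rw [hm]; exact Ideal.subset_span (by simp)
  have hπx : π x = 0 := Ideal.Quotient.eq_zero_iff_mem.mpr (Ideal.mem_span_singleton_self x)
  have hmaxA : maximalIdeal A = Ideal.span {π y} := by
    apply le_antisymm
    · intro z hz
      obtain ⟨a, rfl⟩ := Ideal.Quotient.mk_surjective z
      have ha : a ∈ maximalIdeal R := by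
        by_contra hnot
        exact (IsLocalRing.mem_maximalIdeal _).mp hz
          ((IsLocalRing.notMem_maximalIdeal.mp hnot).map π)
      rw [hm] at ha
      have hmem := Ideal.mem_map_of_mem π ha
      rw [Ideal.map_span, Set.image_insert_eq, Set.image_singleton, hπx] at hmem
      refine (Ideal.span_le.mpr ?_) hmem
      intro z hz
      simp only [Set.mem_insert_iff, Set.mem_singleton_iff] at hz
      rcases hz with rfl | rfl
      · exact (Ideal.span {π y}).zero_mem
      · exact Ideal.subset_span rfl
    · rw [Ideal.span_le, Set.singleton_subset_iff, SetLike.mem_coe,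
        IsLocalRing.mem_maximalIdeal, mem_nonunits_iff]
      intro hunit
      obtain ⟨u, hu⟩ := hunit
      have : ∃ c : R, π y * π c = 1 := by
        refine ⟨(Ideal.Quotient.mk_surjective (↑u⁻¹ : A)).choose, ?_⟩
        rw [(Ideal.Quotient.mk_surjective (↑u⁻¹ : A)).choose_spec, ← hu, Units.mul_inv]
      obtain ⟨c, hc⟩ := this
      have hyc : y * c - 1 ∈ X := by
        have h7 : π (y * c - 1) = 0 := by
          rw [map_sub, _root_.map_mul, map_one, hc, sub_self]
        exact Ideal.Quotient.eq_zero_iff_mem.mp h7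
      have hxle : X ≤ maximalIdeal R := le_maximalIdeal hne
      have : (1 : R) ∈ maximalIdeal R := by
        have h1 : y * c ∈ maximalIdeal R := Ideal.mul_mem_right _ _ hym
        have h2 : y * c - 1 ∈ maximalIdeal R := hxle hyc
        simpa using Submodule.sub_mem _ h1 h2
      exact (Ideal.IsMaximal.ne_top (IsLocalRing.maximalIdeal.isMaximal R))
        ((Ideal.eq_top_iff_one _).mpr this)
  have hKrull : (⨅ n : ℕ, (maximalIdeal A) ^ n) = ⊥ :=
    Ideal.iInf_pow_eq_bot_of_isLocalRing _
      (Ideal.IsMaximal.ne_top (IsLocalRing.maximalIdeal.isMaximal A))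
  have hynil : ∀ i : ℕ, (π y) ^ i ≠ 0 := by
    intro i h
    refine hy i ?_
    rw [← Ideal.Quotient.eq_zero_iff_mem, ← hπ, map_pow]
    exact h
  have decomp : ∀ a : A, a ≠ 0 → ∃ (u : A) (i : ℕ), IsUnit u ∧ a = u * (π y) ^ i := by
    intro a ha
    classical
    have hnotinf : ¬ a ∈ ⨅ n : ℕ, (maximalIdeal A) ^ n := by
      rw [hKrull]; simpa using ha
    have hP : ∃ n, a ∉ (maximalIdeal A) ^ n := by
      by_contra hcon
      push_neg at hcon
      exact hnotinf (Submodule.mem_iInf _ |>.mpr hcon)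
    set n₀ := Nat.find hP with hn₀def
    have hn₀ : a ∉ (maximalIdeal A) ^ n₀ := Nat.find_spec hP
    have hpos : n₀ ≠ 0 := by
      intro h
      rw [h, pow_zero] at hn₀
      exact hn₀ (by simp [Ideal.one_eq_top])
    have hmem : a ∈ (maximalIdeal A) ^ (n₀ - 1) := by
      by_contra h
      exact Nat.find_min hP (show n₀ - 1 < n₀ by omega) h
    rw [hmaxA, Ideal.span_singleton_pow, Ideal.mem_span_singleton'] at hmem
    obtain ⟨c, hc⟩ := hmem
    have hcu : IsUnit c := by
      by_contra hcu
      have hcm : c ∈ maximalIdeal A := (IsLocalRing.mem_maximalIdeal _).mpr hcu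
      rw [hmaxA, Ideal.mem_span_singleton'] at hcm
      obtain ⟨d, hd⟩ := hcm
      apply hn₀
      rw [hmaxA, Ideal.span_singleton_pow, Ideal.mem_span_singleton']
      refine ⟨d, ?_⟩
      have hn : n₀ = (n₀ - 1) + 1 := by omega
      rw [← hc, ← hd]
      conv_lhs => rw [hn, pow_succ]
      ring
    exact ⟨c, n₀ - 1, hcu, hc.symm⟩
  constructor
  · exact hne
  · intro a b hab
    by_contra hcon
    push_neg at hcon
    obtain ⟨ha, hb⟩ := hcon
    have ha' : π a ≠ 0 := fun h => ha (Ideal.Quotient.eq_zero_iff_mem.mp h)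
    have hb' : π b ≠ 0 := fun h => hb (Ideal.Quotient.eq_zero_iff_mem.mp h)
    obtain ⟨u, i, hu, hui⟩ := decomp _ ha'
    obtain ⟨v, j, hv, hvj⟩ := decomp _ hb'
    have hab0 : π a * π b = 0 := by
      rw [← _root_.map_mul]
      exact Ideal.Quotient.eq_zero_iff_mem.mpr hab
    have h8 : (u * v) * ((π y) ^ (i + j)) = π a * π b := by
      rw [hui, hvj, pow_add]; ring
    rw [hab0] at h8
    have hyij : (π y) ^ (i + j) = 0 := by
      have huv : IsUnit (u * v) := hu.mul hv
      obtain ⟨w, hw⟩ := huv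
      rw [← hw] at h8
      exact (Units.mul_right_eq_zero w).mp h8
    exact hynil _ hyij

lemma aux_core {R : Type*} [CommRing R] [IsDomain R] (x y z : R) (px : Prime x)
    (hxy : ¬ x ∣ y) (α β n : ℕ) (hα : 0 < α) (hαβ : α < β) (hβn : β < n)
    (c d g h : R)
    (h2 : z * (x * y ^ β) = c * x ^ 3 + d * y ^ n)
    (h1 : z * (x ^ 2 * y ^ α) = g * x ^ 3 + h * y ^ n) :
    ∃ f d'' h', z = f * x ^ 2 + d'' * (x * y ^ (n - β)) + h' * y ^ (n - α) := by
  have hx0 : x ≠ 0 := px.ne_zero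
  have hxyn : ∀ m : ℕ, ¬ x ∣ y ^ m := fun m hdvd => hxy (px.dvd_of_dvd_pow hdvd)
  -- step 1 : x ∣ d
  have hd1 : x ∣ d * y ^ n := ⟨z * y ^ β - c * x ^ 2, by linear_combination -h2⟩
  obtain ⟨d', hd'⟩ := (px.dvd_or_dvd hd1).resolve_right (hxyn n)
  have e2 : z * y ^ β = c * x ^ 2 + d' * y ^ n := by
    apply mul_left_cancel₀ hx0
    linear_combination h2 + y ^ n * hd'
  -- step 2 : x^2 ∣ z - d' * y^(n-β)
  have hyn : y ^ β * y ^ (n - β) = y ^ n := pow_mul_pow_sub y hβn.le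
  have hyβ : y ^ β * (z - d' * y ^ (n - β)) = c * x ^ 2 := by
    linear_combination e2 - d' * hyn
  have hw : x ∣ y ^ β * (z - d' * y ^ (n - β)) := ⟨c * x, by linear_combination hyβ⟩
  obtain ⟨w₁, hw₁⟩ := (px.dvd_or_dvd hw).resolve_left (hxyn β)
  have e3 : y ^ β * w₁ = c * x := by
    apply mul_left_cancel₀ hx0
    linear_combination hyβ - y ^ β * hw₁
  have hw2 : x ∣ y ^ β * w₁ := ⟨c, by linear_combination e3⟩
  obtain ⟨f, hf⟩ := (px.dvd_or_dvd hw2).resolve_left (hxyn β)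
  have hz : z = x ^ 2 * f + d' * y ^ (n - β) := by
    linear_combination hw₁ + x * hf
  -- step 3
  have hyadd : y ^ (n - β) * y ^ α = y ^ (n - β + α) := (pow_add y (n - β) α).symm
  have e4 : h * y ^ n = x ^ 2 * (d' * y ^ (n - β + α) - g * x + f * x ^ 2 * y ^ α) := by
    linear_combination -h1 + x ^ 2 * y ^ α * hz + x ^ 2 * d' * hyadd
  have hd2 : x ∣ h * y ^ n :=
    ⟨x * (d' * y ^ (n - β + α) - g * x + f * x ^ 2 * y ^ α), by linear_combination e4⟩
  obtain ⟨h₁, hh₁⟩ := (px.dvd_or_dvd hd2).resolve_right (hxyn n)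
  have e5 : h₁ * y ^ n = x * (d' * y ^ (n - β + α) - g * x + f * x ^ 2 * y ^ α) := by
    apply mul_left_cancel₀ hx0
    linear_combination e4 - y ^ n * hh₁
  have hd3 : x ∣ h₁ * y ^ n := ⟨d' * y ^ (n - β + α) - g * x + f * x ^ 2 * y ^ α, e5⟩
  obtain ⟨h₂, hh₂⟩ := (px.dvd_or_dvd hd3).resolve_right (hxyn n)
  have e6 : h₂ * y ^ n = d' * y ^ (n - β + α) - g * x + f * x ^ 2 * y ^ α := by
    apply mul_left_cancel₀ hx0
    linear_combination e5 - y ^ n * hh₂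
  have hyadd2 : y ^ (n - β + α) * y ^ (β - α) = y ^ n := by
    rw [← pow_add]
    congr 1
    omega
  have e7 : y ^ (n - β + α) * (d' - h₂ * y ^ (β - α)) = x * (g - f * x * y ^ α) := by
    linear_combination -e6 - h₂ * hyadd2
  have hd4 : x ∣ y ^ (n - β + α) * (d' - h₂ * y ^ (β - α)) := ⟨g - f * x * y ^ α, e7⟩
  obtain ⟨d'', hd''⟩ := (px.dvd_or_dvd hd4).resolve_left (hxyn (n - β + α))
  have hyadd3 : y ^ (β - α) * y ^ (n - β) = y ^ (n - α) := by
    rw [← pow_add]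
    congr 1
    omega
  refine ⟨f, d'', h₂, ?_⟩
  linear_combination hz + y ^ (n - β) * hd'' + h₂ * hyadd3

/-- For `0 < α < β < n`, `I = (x³, x²yᵅ, xyᵝ, yⁿ)` and `Q = (x³, yⁿ)`:
`Q : I = (x², xy^(n-β), y^(n-α))`. -/
theorem colon_computation {R : Type*} [CommRing R] [IsDomain R] [IsNoetherianRing R]
    [IsLocalRing R] (x y : R) (hm : maximalIdeal R = Ideal.span {x, y})
    (hdim : ringKrullDim R = 2)
    (α β n : ℕ) (hα : 0 < α) (hαβ : α < β) (hβn : β < n)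
    (I Q : Ideal R)
    (hI : I = Ideal.span {x ^ 3, x ^ 2 * y ^ α, x * y ^ β, y ^ n})
    (hQ : Q = Ideal.span {x ^ 3, y ^ n}) :
    Q.colon I = Ideal.span {x ^ 2, x * y ^ (n - β), y ^ (n - α)} := by
  subst hI hQ
  have px : Prime x := aux_prime x y hm hdim
  have hxy : ¬ x ∣ y := by
    intro hd
    exact aux_ynotin x y hm hdim 1
      (Ideal.mem_span_singleton.mpr (by simpa using hd))
  apply le_antisymm
  · intro z hz
    have h1m : z * (x ^ 2 * y ^ α) ∈ Ideal.span {x ^ 3, y ^ n} := by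
      have := Submodule.mem_colon.mp hz (x ^ 2 * y ^ α) (Ideal.subset_span (by simp))
      simpa [smul_eq_mul] using this
    have h2m : z * (x * y ^ β) ∈ Ideal.span {x ^ 3, y ^ n} := by
      have := Submodule.mem_colon.mp hz (x * y ^ β) (Ideal.subset_span (by simp))
      simpa [smul_eq_mul] using this
    obtain ⟨g, h, hgh⟩ := Ideal.mem_span_pair.mp h1m
    obtain ⟨c, d, hcd⟩ := Ideal.mem_span_pair.mp h2m
    obtain ⟨f, d'', h', hzeq⟩ :=
      aux_core x y z px hxy α β n hα hαβ hβn c d g h hcd.symm hgh.symm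
    rw [hzeq]
    refine Submodule.add_mem _ (Submodule.add_mem _ ?_ ?_) ?_
    · exact Ideal.mul_mem_left _ f (Ideal.subset_span (by simp))
    · exact Ideal.mul_mem_left _ d'' (Ideal.subset_span (by simp))
    · exact Ideal.mul_mem_left _ h' (Ideal.subset_span (by simp))
  · rw [Ideal.span_le]
    have colon_mem : ∀ w : R,
        w * x ^ 3 ∈ Ideal.span {x ^ 3, y ^ n} →
        w * (x ^ 2 * y ^ α) ∈ Ideal.span {x ^ 3, y ^ n} →
        w * (x * y ^ β) ∈ Ideal.span {x ^ 3, y ^ n} →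
        w * y ^ n ∈ Ideal.span {x ^ 3, y ^ n} →
        w ∈ (Ideal.span {x ^ 3, y ^ n}).colon
          (Ideal.span {x ^ 3, x ^ 2 * y ^ α, x * y ^ β, y ^ n}) := by
      intro w w1 w2 w3 w4
      rw [Submodule.mem_colon]
      intro p hp
      refine Submodule.span_induction
        (p := fun p _ => w • p ∈ Ideal.span {x ^ 3, y ^ n}) ?_ ?_ ?_ ?_ hp
      · intro s hs
        simp only [Set.mem_insert_iff, Set.mem_singleton_iff] at hs
        rcases hs with rfl | rfl | rfl | rfl
        · simpa [smul_eq_mul] using w1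
        · simpa [smul_eq_mul] using w2
        · simpa [smul_eq_mul] using w3
        · simpa [smul_eq_mul] using w4
      · simp
      · intro a b _ _ ha hb
        rw [smul_add]
        exact Submodule.add_mem _ ha hb
      · intro a b _ hb
        rw [smul_comm]
        exact Submodule.smul_mem _ a hb
    intro g hg
    simp only [Set.mem_insert_iff, Set.mem_singleton_iff] at hg
    have hβn' : β ≤ n := hβn.le
    have hαn' : α ≤ n := by omega
    rcases hg with rfl | rfl | rfl
    · refine colon_mem _ ?_ ?_ ?_ ?_
      · exact Ideal.mem_span_pair.mpr ⟨x ^ 2, 0, by ring⟩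
      · exact Ideal.mem_span_pair.mpr ⟨x * y ^ α, 0, by ring⟩
      · exact Ideal.mem_span_pair.mpr ⟨y ^ β, 0, by ring⟩
      · exact Ideal.mem_span_pair.mpr ⟨0, x ^ 2, by ring⟩
    · refine colon_mem _ ?_ ?_ ?_ ?_
      · exact Ideal.mem_span_pair.mpr ⟨x * y ^ (n - β), 0, by ring⟩
      · exact Ideal.mem_span_pair.mpr ⟨y ^ (n - β) * y ^ α, 0, by ring⟩
      · refine Ideal.mem_span_pair.mpr ⟨0, x ^ 2, ?_⟩
        have hh : y ^ (n - β) * y ^ β = y ^ n := pow_sub_mul_pow y hβn'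
        linear_combination -x ^ 2 * hh
      · exact Ideal.mem_span_pair.mpr ⟨0, x * y ^ (n - β), by ring⟩
    · refine colon_mem _ ?_ ?_ ?_ ?_
      · exact Ideal.mem_span_pair.mpr ⟨y ^ (n - α), 0, by ring⟩
      · refine Ideal.mem_span_pair.mpr ⟨0, x ^ 2, ?_⟩
        have hh : y ^ (n - α) * y ^ α = y ^ n := pow_sub_mul_pow y hαn'
        linear_combination -x ^ 2 * hh
      · refine Ideal.mem_span_pair.mpr ⟨0, x * y ^ (β - α), ?_⟩
        have hh : y ^ (n - α) * y ^ β = y ^ (β - α) * y ^ n := by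
          rw [← pow_add, ← pow_add]
          congr 1
          omega
        linear_combination -x * hh
      · exact Ideal.mem_span_pair.mpr ⟨0, y ^ (n - α), by ring⟩
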